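/- Let m be a real number with 0 < m ≤ 1, let R_m(k₁, k₂) = 4·(cos²(k₁/2)·sin²(k₂/2) + sin²(k₁/2)·cos²(k₂/2))^(3/2) / (m·(sin²(k₁/2) + sin²(k₂/2))), and let C_m = {(k₁, k₂) ∈ [0, π]² : 2·cos(k₁/2)·cos(k₂/2) = m}. Then R_m(k₁, k₂) ≤ 4·√(1 − m²/4)/m for every (k₁, k₂) ∈ C_m; moreover (0, 2·arccos(m/2)) ∈ C_m and R_m(0, 2·arccos(m/2)) = 4·√(1 − m²/4)/m, so the maximum of R_m on C_m equals 4·√(1 − m²/4)/m and is attained at (0, 2·arccos(m/2)). -/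
import Mathlib


/-- Curvature radius `R_m(k₁,k₂)` of the level curve `{2 cos(k₁/2) cos(k₂/2) = m}`
(Proposition 8.1). -/
noncomputable def curvRadius (m k₁ k₂ : ℝ) : ℝ :=
  4 * (Real.cos (k₁ / 2) ^ 2 * Real.sin (k₂ / 2) ^ 2
        + Real.sin (k₁ / 2) ^ 2 * Real.cos (k₂ / 2) ^ 2) ^ ((3 : ℝ) / 2) /
    (m * (Real.sin (k₁ / 2) ^ 2 + Real.sin (k₂ / 2) ^ 2))

/-- The piece of the level curve `{2 cos(k₁/2) cos(k₂/2) = m}` in `[0, π]²`. -/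
def levelCurve (m : ℝ) : Set (ℝ × ℝ) :=
  {p : ℝ × ℝ | p.1 ∈ Set.Icc 0 Real.pi ∧ p.2 ∈ Set.Icc 0 Real.pi ∧
    2 * Real.cos (p.1 / 2) * Real.cos (p.2 / 2) = m}

lemma rpow_three_halves (M : ℝ) (hM : 0 < M) :
    M ^ ((3 : ℝ) / 2) = M * Real.sqrt M := by
  rw [show (3:ℝ)/2 = 1 + 1/2 by norm_num, Real.rpow_add hM, Real.rpow_one,
    Real.sqrt_eq_rpow]

lemma alg_key (m c1 s1 c2 s2 : ℝ) (hm0 : 0 < m) (hm1 : m ≤ 1)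
    (hp1 : s1 ^ 2 + c1 ^ 2 = 1) (hp2 : s2 ^ 2 + c2 ^ 2 = 1)
    (hc : 2 * c1 * c2 = m) :
    4 * (c1 ^ 2 * s2 ^ 2 + s1 ^ 2 * c2 ^ 2) ^ ((3:ℝ)/2) /
      (m * (s1 ^ 2 + s2 ^ 2)) ≤ 4 * Real.sqrt (1 - m ^ 2 / 4) / m := by
  have hMpos : (0:ℝ) < 1 - m ^ 2 / 4 := by nlinarith
  have hM32 := rpow_three_halves _ hMpos
  have hc1le : c1 ^ 2 ≤ 1 := by nlinarith [sq_nonneg s1]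
  have hc2le : c2 ^ 2 ≤ 1 := by nlinarith [sq_nonneg s2]
  have hm2 : m ^ 2 = 4 * c1 ^ 2 * c2 ^ 2 := by rw [← hc]; ring
  have hA0 : 0 ≤ c1 ^ 2 * s2 ^ 2 + s1 ^ 2 * c2 ^ 2 := by positivity
  have hAM : c1 ^ 2 * s2 ^ 2 + s1 ^ 2 * c2 ^ 2 ≤ 1 - m ^ 2 / 4 := by
    nlinarith [mul_nonneg (by linarith : (0:ℝ) ≤ 1 - c1 ^ 2)
      (by linarith : (0:ℝ) ≤ 1 - c2 ^ 2)]
  have hSA : s1 ^ 2 + s2 ^ 2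
      = 2 * (1 - m ^ 2 / 4) - (c1 ^ 2 * s2 ^ 2 + s1 ^ 2 * c2 ^ 2) := by
    rw [hm2]; nlinarith [hp1, hp2]
  have hSpos : 0 < s1 ^ 2 + s2 ^ 2 := by rw [hSA]; linarith
  have key : (c1 ^ 2 * s2 ^ 2 + s1 ^ 2 * c2 ^ 2) ^ ((3:ℝ)/2)
      ≤ Real.sqrt (1 - m ^ 2 / 4) * (s1 ^ 2 + s2 ^ 2) := by
    have h1 : (c1 ^ 2 * s2 ^ 2 + s1 ^ 2 * c2 ^ 2) ^ ((3:ℝ)/2)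
        ≤ (1 - m ^ 2 / 4) ^ ((3:ℝ)/2) :=
      Real.rpow_le_rpow hA0 hAM (by norm_num)
    have h3 : (c1 ^ 2 * s2 ^ 2 + s1 ^ 2 * c2 ^ 2) * Real.sqrt (1 - m ^ 2 / 4)
        ≤ (1 - m ^ 2 / 4) * Real.sqrt (1 - m ^ 2 / 4) :=
      mul_le_mul_of_nonneg_right hAM (Real.sqrt_nonneg _)
    rw [hSA]
    nlinarith [hM32, h1, h3]
  rw [div_le_div_iff₀ (by positivity) hm0]
  nlinarith [mul_le_mul_of_nonneg_left key hm0.le]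

/-- The maximum of the curvature radius on the level curve is
`4 √(1 − m²/4) / m`, attained at `(0, 2 arccos(m/2))` (Proposition 8.1). -/
theorem curvRadius_max
    (m : ℝ) (hm0 : 0 < m) (hm1 : m ≤ 1) :
    (∀ p ∈ levelCurve m, curvRadius m p.1 p.2 ≤ 4 * Real.sqrt (1 - m ^ 2 / 4) / m) ∧
    ((0 : ℝ), 2 * Real.arccos (m / 2)) ∈ levelCurve m ∧
    curvRadius m 0 (2 * Real.arccos (m / 2)) = 4 * Real.sqrt (1 - m ^ 2 / 4) / m := by
  have hMpos : (0:ℝ) < 1 - m ^ 2 / 4 := by nlinarith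
  have hM32 := rpow_three_halves _ hMpos
  refine ⟨?_, ?_, ?_⟩
  · rintro ⟨k₁, k₂⟩ ⟨⟨h1a, h1b⟩, ⟨h2a, h2b⟩, hc⟩
    simp only at hc
    exact alg_key m _ _ _ _ hm0 hm1 (Real.sin_sq_add_cos_sq _)
      (Real.sin_sq_add_cos_sq _) hc
  · have h2 : m / 2 ∈ Set.Icc (-1:ℝ) 1 := by constructor <;> linarith
    refine ⟨⟨le_refl 0, Real.pi_nonneg⟩, ⟨mul_nonneg (by norm_num) (Real.arccos_nonneg _), ?_⟩, ?_⟩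
    · have h := (Real.arccos_le_pi_div_two (x := m/2)).2 (by linarith)
      linarith
    · show 2 * Real.cos (0 / 2) * Real.cos (2 * Real.arccos (m/2) / 2) = m
      rw [show (2 * Real.arccos (m/2)) / 2 = Real.arccos (m/2) by ring,
        Real.cos_arccos h2.1 h2.2]
      norm_num
      ring
  · have hss : Real.sin (2 * Real.arccos (m/2) / 2) ^ 2 = 1 - m ^ 2 / 4 := by
      rw [show (2 * Real.arccos (m/2)) / 2 = Real.arccos (m/2) by ring,
        Real.sin_arccos, Real.sq_sqrt (by nlinarith)]
      ring
    rw [curvRadius, hss]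
    norm_num
    rw [hM32, div_eq_div_iff (by positivity : (0:ℝ) < m * (1 - m ^ 2 / 4)).ne' hm0.ne']
    ring
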